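/- arXiv:1505.00653 — 2 statements merged into one kernel-verified Lean document; each statement's English description precedes it below -/
import Mathlib

section
/- Suppose all roots of Δ have the same length (simply-laced case). If γ ≽ μ are positive roots, then the unique minimal-length element w_{γ,μ} ∈ W with w_{γ,μ}(γ) = μ is commutative, i.e., no reduced expression for w_{γ,μ} contains a substring σ_α σ_β σ_α with α, β adjacent simple roots. -/
open scoped RealInnerProductSpace

/-- Data of a crystallographic root system in a real inner product space `V`,
with simple roots indexed by a finite type `ι`. -/
structure RSD (ι V : Type*) [Fintype ι] [NormedAddCommGroup V]
    [InnerProductSpace ℝ V] where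
  /-- The simple roots. -/
  sroot : ι → V
  /-- The set of roots. -/
  Δ : Set V
  finite : Δ.Finite
  zero_not_mem : (0 : V) ∉ Δ
  sroot_mem : ∀ i, sroot i ∈ Δ
  sroot_indep : LinearIndependent ℝ sroot
  neg_mem : ∀ a ∈ Δ, -a ∈ Δ
  /-- Crystallographic condition. -/
  crys : ∀ a ∈ Δ, ∀ b ∈ Δ, ∃ n : ℤ, 2 * ⟪a, b⟫ / ⟪a, a⟫ = (n : ℝ)
  /-- The reflection associated with a vector (only specified on roots). -/
  reflect : V → (V ≃ₗ[ℝ] V)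
  reflect_apply : ∀ a ∈ Δ, ∀ v : V,
    reflect a v = v - (2 * ⟪a, v⟫ / ⟪a, a⟫) • a
  reflect_root_mem : ∀ a ∈ Δ, ∀ b ∈ Δ, reflect a b ∈ Δ
  /-- Every root is a nonnegative or nonpositive integral combination of simple roots. -/
  decomp : ∀ a ∈ Δ, (∃ c : ι → ℕ, a = ∑ i, (c i : ℝ) • sroot i) ∨
      (∃ c : ι → ℕ, a = -∑ i, (c i : ℝ) • sroot i)
  /-- Irreducibility. -/
  irred : ∀ S T : Set V, S ∪ T = Δ → (∀ a ∈ S, ∀ b ∈ T, ⟪a, b⟫ = 0) →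
      S = ∅ ∨ T = ∅

namespace RSD

variable {ι V : Type*} [Fintype ι] [NormedAddCommGroup V] [InnerProductSpace ℝ V]
  (R : RSD ι V)

/-- The set of positive roots. -/
def pos : Set V := {a ∈ R.Δ | ∃ c : ι → ℕ, a = ∑ i, (c i : ℝ) • R.sroot i}

/-- `R.le μ γ` means `μ ≼ γ`, i.e. `γ - μ` is a nonnegative integral combination
of simple roots. -/
def le (μ γ : V) : Prop := ∃ c : ι → ℕ, γ - μ = ∑ i, (c i : ℝ) • R.sroot i

/-- The Weyl group, generated by the simple reflections. -/
def W : Subgroup (V ≃ₗ[ℝ] V) :=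
  Subgroup.closure (Set.range fun i => R.reflect (R.sroot i))

/-- The inversion set `N(w) = {γ ∈ Δ⁺ ∣ w γ ∈ -Δ⁺}`. -/
def N (w : V ≃ₗ[ℝ] V) : Set V := {γ ∈ R.pos | -(w γ) ∈ R.pos}

/-- The length of `w`: minimal length of an expression of `w` as a product of
simple reflections. -/
noncomputable def len (w : V ≃ₗ[ℝ] V) : ℕ :=
  sInf {n | ∃ l : List ι, l.length = n ∧
    (l.map fun i => R.reflect (R.sroot i)).prod = w}

/-- The coroot `a∨ = 2a/(a,a)`. -/
@[nolint unusedArguments]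
noncomputable def coroot (_R : RSD ι V) (a : V) : V := (2 / ⟪a, a⟫) • a

/-- `ρ`, the half-sum of the positive roots. -/
noncomputable def rho : V :=
  (2⁻¹ : ℝ) • ∑ a ∈ (R.finite.subset (fun a ha => ha.1 : R.pos ⊆ R.Δ)).toFinset, a

/-- `R.HtIs γ n` : the height of `γ` is `n`. -/
def HtIs (γ : V) (n : ℕ) : Prop :=
  ∃ c : ι → ℕ, γ = ∑ i, (c i : ℝ) • R.sroot i ∧ ∑ i, c i = n

/-- A long root: a root of maximal squared length. -/
def IsLong (γ : V) : Prop := γ ∈ R.Δ ∧ ∀ b ∈ R.Δ, ⟪b, b⟫ ≤ ⟪γ, γ⟫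

/-- The highest root. -/
def IsHighest (θ : V) : Prop := θ ∈ R.pos ∧ ∀ γ ∈ R.pos, R.le γ θ

/-- Simply-laced: all roots have the same length. -/
def SimplyLaced : Prop := ∀ a ∈ R.Δ, ∀ b ∈ R.Δ, ⟪a, a⟫ = ⟪b, b⟫

/-- A minimal inversion complete set. -/
def IsMICS (F : Set (V ≃ₗ[ℝ] V)) : Prop :=
  (∀ w ∈ F, w ∈ R.W) ∧ (⋃ w ∈ F, R.N w) = R.pos ∧
    ∀ F' ⊂ F, (⋃ w ∈ F', R.N w) ≠ R.pos

end RSD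


section Aux

open scoped RealInnerProductSpace

variable {ι V : Type*} [Fintype ι] [NormedAddCommGroup V] [InnerProductSpace ℝ V]

/-- Product of simple reflections along a word. -/
def RSD.pr (R : RSD ι V) (l : List ι) : V ≃ₗ[ℝ] V :=
  (l.map fun i => R.reflect (R.sroot i)).prod

namespace RSD

variable (R : RSD ι V)

lemma mul_apply' (f g : V ≃ₗ[ℝ] V) (x : V) : (f * g) x = f (g x) := rfl

lemma pr_nil : R.pr ([] : List ι) = 1 := rfl

lemma pr_cons (i : ι) (l : List ι) :
    R.pr (i :: l) = R.reflect (R.sroot i) * R.pr l := by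
  simp [RSD.pr]

lemma pr_append (a b : List ι) : R.pr (a ++ b) = R.pr a * R.pr b := by
  simp [RSD.pr]

lemma pr_singleton (i : ι) : R.pr [i] = R.reflect (R.sroot i) := by
  simp [RSD.pr]

lemma root_inner_pos {a : V} (ha : a ∈ R.Δ) : 0 < ⟪a, a⟫ := by
  have h0 : a ≠ 0 := fun h => R.zero_not_mem (h ▸ ha)
  have : 0 < ‖a‖ := norm_pos_iff.mpr h0
  rw [real_inner_self_eq_norm_sq]
  positivity

lemma root_inner_ne {a : V} (ha : a ∈ R.Δ) : ⟪a, a⟫ ≠ 0 :=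
  ne_of_gt (R.root_inner_pos ha)

lemma reflect_reflect {a : V} (ha : a ∈ R.Δ) (x : V) :
    R.reflect a (R.reflect a x) = x := by
  have hA := R.root_inner_ne ha
  rw [R.reflect_apply a ha, R.reflect_apply a ha, inner_sub_right, real_inner_smul_right]
  match_scalars
  · ring
  · field_simp
    ring

lemma reflect_inner {a : V} (ha : a ∈ R.Δ) (x y : V) :
    ⟪R.reflect a x, R.reflect a y⟫ = ⟪x, y⟫ := by
  have hA := R.root_inner_ne ha
  rw [R.reflect_apply a ha, R.reflect_apply a ha]
  simp only [inner_sub_left, inner_sub_right, real_inner_smul_left, real_inner_smul_right]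
  rw [real_inner_comm x a]
  field_simp
  ring

lemma reflect_sq (i : ι) :
    R.reflect (R.sroot i) * R.reflect (R.sroot i) = 1 :=
  LinearEquiv.ext fun x => R.reflect_reflect (R.sroot_mem i) x

lemma reflect_inv (i : ι) :
    (R.reflect (R.sroot i))⁻¹ = R.reflect (R.sroot i) :=
  inv_eq_of_mul_eq_one_right (R.reflect_sq i)

lemma pr_reverse (l : List ι) : R.pr l.reverse = (R.pr l)⁻¹ := by
  induction l with
  | nil => simp [RSD.pr]
  | cons i l ih =>
      rw [List.reverse_cons, pr_append, ih, pr_singleton, pr_cons, mul_inv_rev, reflect_inv]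

lemma pr_mem_root (l : List ι) {a : V} (ha : a ∈ R.Δ) : R.pr l a ∈ R.Δ := by
  induction l with
  | nil => simpa [RSD.pr]
  | cons i l ih =>
      rw [pr_cons, mul_apply']
      exact R.reflect_root_mem _ (R.sroot_mem i) _ ih

lemma pr_inner (l : List ι) (x y : V) : ⟪R.pr l x, R.pr l y⟫ = ⟪x, y⟫ := by
  induction l generalizing x y with
  | nil => simp [RSD.pr]
  | cons i t ih =>
      rw [pr_cons, mul_apply', mul_apply', R.reflect_inner (R.sroot_mem i), ih]

lemma pr_mem_W (l : List ι) : R.pr l ∈ R.W := by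
  induction l with
  | nil => rw [pr_nil]; exact one_mem _
  | cons i l ih =>
      rw [pr_cons]
      exact mul_mem (Subgroup.subset_closure ⟨i, rfl⟩) ih

lemma sroot_pos (i : ι) : R.sroot i ∈ R.pos := by
  classical
  refine ⟨R.sroot_mem i, fun k => if k = i then 1 else 0, ?_⟩
  rw [Finset.sum_eq_single i (fun b _ hb => by simp [hb]) (fun h => absurd (Finset.mem_univ i) h)]
  simp

lemma pos_neg_false {a : V} (h1 : a ∈ R.pos) (h2 : -a ∈ R.pos) : False := by
  obtain ⟨haΔ, c, hc⟩ := h1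
  obtain ⟨_, d, hd⟩ := h2
  have hsum : ∑ k, ((c k : ℝ) + (d k : ℝ)) • R.sroot k = 0 := by
    simp only [add_smul, Finset.sum_add_distrib]
    rw [← hc, ← hd, add_neg_cancel]
  have hz := Fintype.linearIndependent_iff.mp R.sroot_indep _ hsum
  have ha0 : a = 0 := by
    rw [hc]
    apply Finset.sum_eq_zero
    intro k _
    have h := hz k
    have hc0 : (c k : ℝ) = 0 := by
      have := Nat.cast_nonneg (α := ℝ) (c k)
      have := Nat.cast_nonneg (α := ℝ) (d k)
      linarith
    rw [hc0, zero_smul]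
  exact R.zero_not_mem (ha0 ▸ haΔ)

lemma root_pos_or {a : V} (ha : a ∈ R.Δ) : a ∈ R.pos ∨ -a ∈ R.pos := by
  rcases R.decomp a ha with ⟨c, hc⟩ | ⟨c, hc⟩
  · exact Or.inl ⟨ha, c, hc⟩
  · exact Or.inr ⟨R.neg_mem a ha, c, by rw [hc, neg_neg]⟩

lemma coords_unique (f g : ι → ℝ)
    (h : ∑ k, f k • R.sroot k = ∑ k, g k • R.sroot k) (k : ι) : f k = g k := by
  have h2 : ∑ k, (f k - g k) • R.sroot k = 0 := by
    simp only [sub_smul, Finset.sum_sub_distrib, h, sub_self]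
  have := Fintype.linearIndependent_iff.mp R.sroot_indep _ h2 k
  linarith

lemma sum_delta [DecidableEq ι] (t : ℝ) (i : ι) :
    ∑ k, (if k = i then t else 0) • R.sroot k = t • R.sroot i := by
  rw [Finset.sum_eq_single i (fun b _ hb => by simp [hb]) (fun h => absurd (Finset.mem_univ i) h)]
  simp

lemma cartan (hsl : R.SimplyLaced) {a b : V} (ha : a ∈ R.Δ) (hb : b ∈ R.Δ) :
    ∃ n : ℤ, 2 * ⟪a, b⟫ / ⟪a, a⟫ = (n : ℝ) ∧ -2 ≤ n ∧ n ≤ 2 ∧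
      (n = 2 → b = a) ∧ (n = -2 → b = -a) := by
  obtain ⟨n, hn⟩ := R.crys a ha b hb
  have hApos := R.root_inner_pos ha
  have hA := ne_of_gt hApos
  have hBA : ⟪b, b⟫ = ⟪a, a⟫ := hsl b hb a ha
  have hnorm : ‖b‖ = ‖a‖ := by
    have h1 := real_inner_self_eq_norm_sq a
    have h2 := real_inner_self_eq_norm_sq b
    nlinarith [norm_nonneg a, norm_nonneg b]
  have hcs : |⟪a, b⟫| ≤ ⟪a, a⟫ := by
    calc |⟪a, b⟫| ≤ ‖a‖ * ‖b‖ := abs_real_inner_le_norm a b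
    _ = ‖a‖ ^ 2 := by rw [hnorm]; ring
    _ = ⟪a, a⟫ := (real_inner_self_eq_norm_sq a).symm
  have habs : |(n : ℝ)| ≤ 2 := by
    rw [← hn, abs_div, abs_of_pos hApos, div_le_iff₀ hApos, abs_mul]
    rw [abs_of_pos (by norm_num : (0:ℝ) < 2)]
    nlinarith [abs_nonneg (⟪a, b⟫)]
  have hbnd : -2 ≤ n ∧ n ≤ 2 := by
    have h : |n| ≤ 2 := by exact_mod_cast (by rwa [← Int.cast_abs] at habs : ((|n| : ℤ) : ℝ) ≤ 2)
    exact abs_le.mp h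
  refine ⟨n, hn, hbnd.1, hbnd.2, ?_, ?_⟩
  · intro h2
    rw [h2, Int.cast_two] at hn
    have hab : ⟪a, b⟫ = ⟪a, a⟫ := by
      rw [div_eq_iff hA] at hn
      linarith
    have hz : ⟪b - a, b - a⟫ = (0 : ℝ) := by
      simp only [inner_sub_left, inner_sub_right]
      rw [real_inner_comm a b]
      linarith [hab]
    have := inner_self_eq_zero.mp hz
    exact (sub_eq_zero.mp this)
  · intro h2
    rw [h2] at hn
    push_cast at hn
    have hab : ⟪a, b⟫ = -⟪a, a⟫ := by
      rw [div_eq_iff hA] at hn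
      linarith
    have hz : ⟪b + a, b + a⟫ = (0 : ℝ) := by
      simp only [inner_add_left, inner_add_right]
      rw [real_inner_comm a b]
      linarith [hab]
    have := inner_self_eq_zero.mp hz
    exact eq_neg_of_add_eq_zero_left this

lemma diff_not_pos {i j : ι} (hij : i ≠ j) : R.sroot j - R.sroot i ∉ R.pos := by
  classical
  rintro ⟨_, c, hc⟩
  have key : ∑ k, (c k : ℝ) • R.sroot k
      = ∑ k, ((if k = j then (1:ℝ) else 0) + (if k = i then (-1:ℝ) else 0)) • R.sroot k := by
    simp only [add_smul, Finset.sum_add_distrib, R.sum_delta]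
    rw [← hc]
    module
  have h := R.coords_unique _ _ key i
  rw [if_neg hij, if_pos rfl] at h
  have := Nat.cast_nonneg (α := ℝ) (c i)
  linarith

lemma adj (hsl : R.SimplyLaced) {i j : ι} (hij : i ≠ j)
    (hin : ⟪R.sroot i, R.sroot j⟫ ≠ 0) :
    2 * ⟪R.sroot i, R.sroot j⟫ / ⟪R.sroot i, R.sroot i⟫ = -1 := by
  obtain ⟨n, hn, hl, hr, h2, hm2⟩ := R.cartan hsl (R.sroot_mem i) (R.sroot_mem j)
  have hA := R.root_inner_ne (R.sroot_mem i)
  have hn0 : n ≠ 0 := by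
    rintro rfl
    rw [Int.cast_zero, div_eq_iff hA] at hn
    exact hin (by linarith)
  have hn2 : n ≠ 2 := fun h => hij (R.sroot_indep.injective (h2 h)).symm
  have hnm2 : n ≠ -2 := by
    intro h
    exact R.pos_neg_false (R.sroot_pos i) (by rw [← hm2 h]; exact R.sroot_pos j)
  have hn1 : n ≠ 1 := by
    intro h
    have hmem : R.sroot j - R.sroot i ∈ R.Δ := by
      have := R.reflect_root_mem _ (R.sroot_mem i) _ (R.sroot_mem j)
      rwa [R.reflect_apply _ (R.sroot_mem i), hn, h, Int.cast_one, one_smul] at this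
    rcases R.root_pos_or hmem with hp | hp
    · exact R.diff_not_pos hij hp
    · rw [neg_sub] at hp
      exact R.diff_not_pos hij.symm hp
  have : n = -1 := by omega
  rw [hn, this, Int.cast_neg, Int.cast_one]

lemma reflect_self {a : V} (ha : a ∈ R.Δ) : R.reflect a a = -a := by
  have hA := R.root_inner_ne ha
  rw [R.reflect_apply a ha]
  match_scalars
  field_simp
  norm_num

lemma reflect_adj (hsl : R.SimplyLaced) {i j : ι} (hij : i ≠ j)
    (hin : ⟪R.sroot i, R.sroot j⟫ ≠ 0) :
    R.reflect (R.sroot i) (R.sroot j) = R.sroot i + R.sroot j := by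
  rw [R.reflect_apply _ (R.sroot_mem i), R.adj hsl hij hin]
  module

lemma braid_formula (hsl : R.SimplyLaced) {i j : ι} (hij : i ≠ j)
    (hin : ⟪R.sroot i, R.sroot j⟫ ≠ 0) (x : V) :
    R.reflect (R.sroot i) (R.reflect (R.sroot j) (R.reflect (R.sroot i) x))
      = x - (2 * (⟪R.sroot i, x⟫ + ⟪R.sroot j, x⟫) / ⟪R.sroot i, R.sroot i⟫) •
          (R.sroot i + R.sroot j) := by
  have hi := R.sroot_mem i
  have hj := R.sroot_mem j
  have hA := R.root_inner_ne hi
  have hJJ : ⟪R.sroot j, R.sroot j⟫ = ⟪R.sroot i, R.sroot i⟫ := hsl _ hj _ hi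
  have hIJ : ⟪R.sroot i, R.sroot j⟫ = -(⟪R.sroot i, R.sroot i⟫ / 2) := by
    have h := R.adj hsl hij hin
    rw [div_eq_iff hA] at h
    linarith
  have hJI : ⟪R.sroot j, R.sroot i⟫ = -(⟪R.sroot i, R.sroot i⟫ / 2) := by
    rw [real_inner_comm]; exact hIJ
  rw [R.reflect_apply _ hi x, R.reflect_apply _ hj, R.reflect_apply _ hi]
  simp only [inner_sub_right, real_inner_smul_right, hJJ, hIJ, hJI]
  match_scalars <;> field_simp <;> ring

lemma braid (hsl : R.SimplyLaced) {i j : ι} (hij : i ≠ j)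
    (hin : ⟪R.sroot i, R.sroot j⟫ ≠ 0) (x : V) :
    R.reflect (R.sroot i) (R.reflect (R.sroot j) (R.reflect (R.sroot i) x))
      = R.reflect (R.sroot j) (R.reflect (R.sroot i) (R.reflect (R.sroot j) x)) := by
  have hin' : ⟪R.sroot j, R.sroot i⟫ ≠ 0 := by rwa [real_inner_comm]
  rw [R.braid_formula hsl hij hin x, R.braid_formula hsl hij.symm hin' x]
  rw [hsl _ (R.sroot_mem j) _ (R.sroot_mem i)]
  match_scalars <;> ring

lemma simple_pos (hsl : R.SimplyLaced) (i : ι) {β : V} (hβ : β ∈ R.pos)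
    (hne : β ≠ R.sroot i) : R.reflect (R.sroot i) β ∈ R.pos := by
  classical
  obtain ⟨hβΔ, c, hc⟩ := hβ
  have hi := R.sroot_mem i
  by_cases hk : ∀ k, k ≠ i → c k = 0
  · exfalso
    have hβval : β = (c i : ℝ) • R.sroot i := by
      rw [hc, Finset.sum_eq_single i (fun b _ hb => by rw [hk b hb]; simp)
        (fun h => absurd (Finset.mem_univ i) h)]
    have hAβ : ⟪β, β⟫ = ⟪R.sroot i, R.sroot i⟫ := hsl _ hβΔ _ hi
    rw [hβval, real_inner_smul_left, real_inner_smul_right] at hAβ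
    have hApos := R.root_inner_pos hi
    have h1 : ((c i : ℝ)) ^ 2 = 1 := by nlinarith
    have h2 : (c i : ℝ) = 1 := by nlinarith [Nat.cast_nonneg (α := ℝ) (c i)]
    exact hne (by rw [hβval, h2, one_smul])
  · push_neg at hk
    obtain ⟨k, hki, hck⟩ := hk
    have hsβΔ : R.reflect (R.sroot i) β ∈ R.Δ := R.reflect_root_mem _ hi _ hβΔ
    rcases R.root_pos_or hsβΔ with h | h
    · exact h
    · exfalso
      obtain ⟨_, d, hd⟩ := h
      have key : ∑ k', ((c k' : ℝ) + (d k' : ℝ)) • R.sroot k'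
          = ∑ k', (if k' = i then 2 * ⟪R.sroot i, β⟫ / ⟪R.sroot i, R.sroot i⟫ else 0)
              • R.sroot k' := by
        simp only [add_smul, Finset.sum_add_distrib, R.sum_delta]
        rw [← hc, ← hd, R.reflect_apply _ hi]
        module
      have h := R.coords_unique _ _ key k
      rw [if_neg hki] at h
      have h1 := Nat.cast_nonneg (α := ℝ) (c k)
      have h2 := Nat.cast_nonneg (α := ℝ) (d k)
      have : (c k : ℝ) = 0 := by linarith
      exact hck (by exact_mod_cast this)

lemma conj (l : List ι) {a : V} (ha : a ∈ R.Δ) :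
    R.reflect (R.pr l a) = R.pr l * R.reflect a * (R.pr l)⁻¹ := by
  apply LinearEquiv.ext
  intro x
  have hmem : R.pr l a ∈ R.Δ := R.pr_mem_root l ha
  have hback : R.pr l ((R.pr l)⁻¹ x) = x := by
    have : R.pr l ((R.pr l)⁻¹ x) = (R.pr l * (R.pr l)⁻¹) x := rfl
    rw [this, mul_inv_cancel]
    rfl
  have hAA : ⟪R.pr l a, R.pr l a⟫ = ⟪a, a⟫ := R.pr_inner l a a
  have hax : ⟪R.pr l a, x⟫ = ⟪a, (R.pr l)⁻¹ x⟫ := by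
    conv_lhs => rw [← hback]
    exact R.pr_inner l a ((R.pr l)⁻¹ x)
  calc R.reflect (R.pr l a) x
      = x - (2 * ⟪R.pr l a, x⟫ / ⟪R.pr l a, R.pr l a⟫) • R.pr l a :=
        R.reflect_apply _ hmem x
    _ = x - (2 * ⟪a, (R.pr l)⁻¹ x⟫ / ⟪a, a⟫) • R.pr l a := by rw [hax, hAA]
    _ = R.pr l (((R.pr l)⁻¹ x) - (2 * ⟪a, (R.pr l)⁻¹ x⟫ / ⟪a, a⟫) • a) := by
        rw [map_sub, map_smul, hback]
    _ = (R.pr l * R.reflect a * (R.pr l)⁻¹) x := by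
        rw [mul_apply', mul_apply', R.reflect_apply a ha]

lemma deletion (hsl : R.SimplyLaced) (A : List ι) :
    ∀ β : V, β ∈ R.pos → -(R.pr A β) ∈ R.pos →
    ∃ (A₁ : List ι) (j : ι) (A₂ : List ι), A = A₁ ++ [j] ++ A₂ ∧
      R.pr A * R.reflect β = R.pr (A₁ ++ A₂) := by
  induction A using List.reverseRecOn with
  | nil =>
      intro β h1 h2
      rw [pr_nil] at h2
      exact absurd h2 (fun h => R.pos_neg_false h1 (by simpa using h))
  | append_singleton A a IH =>
      intro β hβ hneg
      have hβΔ := hβ.1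
      have hprod : R.pr (A ++ [a]) β = R.pr A (R.reflect (R.sroot a) β) := by
        rw [pr_append, pr_singleton, mul_apply']
      by_cases hba : β = R.sroot a
      · refine ⟨A, a, [], by simp, ?_⟩
        rw [List.append_nil, pr_append, pr_singleton, hba, mul_assoc, R.reflect_sq, mul_one]
      · have hpos' : R.reflect (R.sroot a) β ∈ R.pos := R.simple_pos hsl a hβ hba
        have hneg' : -(R.pr A (R.reflect (R.sroot a) β)) ∈ R.pos := hprod ▸ hneg
        obtain ⟨A₁, j, A₂, hA, hP⟩ := IH _ hpos' hneg'
        refine ⟨A₁, j, A₂ ++ [a], by rw [hA]; simp, ?_⟩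
        have hconj := R.conj [a] hβΔ
        rw [pr_singleton, R.reflect_inv a] at hconj
        -- hconj : reflect (reflect (sroot a) β) = reflect (sroot a) * reflect β * reflect (sroot a)
        have hswap : R.reflect (R.sroot a) * R.reflect β
            = R.reflect (R.reflect (R.sroot a) β) * R.reflect (R.sroot a) := by
          rw [hconj, mul_assoc, mul_assoc, R.reflect_sq, mul_one]
        calc R.pr (A ++ [a]) * R.reflect β
            = R.pr A * (R.reflect (R.sroot a) * R.reflect β) := by
              rw [pr_append, pr_singleton, mul_assoc]
          _ = R.pr A * (R.reflect (R.reflect (R.sroot a) β) * R.reflect (R.sroot a)) := by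
              rw [hswap]
          _ = (R.pr A * R.reflect (R.reflect (R.sroot a) β)) * R.reflect (R.sroot a) := by
              rw [mul_assoc]
          _ = R.pr (A₁ ++ A₂) * R.reflect (R.sroot a) := by rw [hP]
          _ = R.pr (A₁ ++ (A₂ ++ [a])) := by
              rw [pr_append, pr_append, pr_append, pr_singleton, mul_assoc]

lemma len_le (w : V ≃ₗ[ℝ] V) (l : List ι) (h : R.pr l = w) : R.len w ≤ l.length :=
  Nat.sInf_le ⟨l, rfl, h⟩

lemma len_word (w : V ≃ₗ[ℝ] V) (l : List ι) (h : R.pr l = w) :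
    ∃ l' : List ι, R.pr l' = w ∧ l'.length = R.len w := by
  have hne : {n | ∃ l : List ι, l.length = n ∧
      (l.map fun i => R.reflect (R.sroot i)).prod = w}.Nonempty := ⟨l.length, l, rfl, h⟩
  obtain ⟨l', h1, h2⟩ := Nat.sInf_mem hne
  exact ⟨l', h2, h1⟩

lemma prefix_pos (hsl : R.SimplyLaced) {w : V ≃ₗ[ℝ] V} (A : List ι) (k : ι) (B : List ι)
    (hw : R.pr (A ++ [k] ++ B) = w) (hred : (A ++ [k] ++ B).length = R.len w) :
    R.pr A (R.sroot k) ∈ R.pos := by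
  by_contra hcon
  have hneg : -(R.pr A (R.sroot k)) ∈ R.pos :=
    (R.root_pos_or (R.pr_mem_root A (R.sroot_mem k))).resolve_left hcon
  obtain ⟨A₁, j, A₂, hA, hP⟩ := R.deletion hsl A _ (R.sroot_pos k) hneg
  have hw' : R.pr (A₁ ++ A₂ ++ B) = w := by
    rw [← hw, R.pr_append (A₁ ++ A₂) B, R.pr_append (A ++ [k]) B, ← hP,
      R.pr_append A [k], pr_singleton]
  have h1 := R.len_le w _ hw'
  have hlenA : A.length = A₁.length + 1 + A₂.length := by
    rw [hA]; simp only [List.length_append, List.length_singleton]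
  simp only [List.length_append, List.length_singleton] at hred h1
  omega

end RSD

end Aux

/-- In the simply-laced case the minimal-length element taking `γ` to
`μ` (for `γ ≽ μ`) is commutative: no reduced expression contains `σ_i σ_j σ_i` with
`i`, `j` adjacent. -/
theorem minimal_length_element_commutative
    {ι V : Type*} [Fintype ι] [NormedAddCommGroup V] [InnerProductSpace ℝ V]
    (R : RSD ι V) (hsl : R.SimplyLaced) (γ μ : V) (hγ : γ ∈ R.pos) (hμ : μ ∈ R.pos)
    (hle : R.le μ γ) (w : V ≃ₗ[ℝ] V) (hw : w ∈ R.W) (hwγ : w γ = μ)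
    (hmin : ∀ w' ∈ R.W, w' γ = μ → R.len w ≤ R.len w') :
    ∀ l : List ι, (l.map fun i => R.reflect (R.sroot i)).prod = w → l.length = R.len w →
      ¬ ∃ (l₁ l₂ : List ι) (i j : ι), l = l₁ ++ [i, j, i] ++ l₂ ∧ i ≠ j ∧
          ⟪R.sroot i, R.sroot j⟫ ≠ 0 := by
  intro l hl hlen
  rintro ⟨l₁, l₂, i, j, rfl, hij, hin⟩
  classical
  have hl' : R.pr (l₁ ++ [i, j, i] ++ l₂) = w := hl
  have hi := R.sroot_mem i
  have hj := R.sroot_mem j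
  have hγΔ := hγ.1
  have hApos := R.root_inner_pos hi
  have hA := ne_of_gt hApos
  have hAj := ne_of_gt (R.root_inner_pos hj)
  have hin' : ⟪R.sroot j, R.sroot i⟫ ≠ 0 := by rwa [real_inner_comm]
  set δ := R.pr l₂ γ with hδdef
  have hδΔ : δ ∈ R.Δ := R.pr_mem_root l₂ hγΔ
  obtain ⟨ci, hci, hcil, hcir, hci2, hcim⟩ := R.cartan hsl hi hδΔ
  obtain ⟨cj, hcj, hcjl, hcjr, hcj2, hcjm⟩ := R.cartan hsl hj hδΔ
  have hθΔ : R.sroot i + R.sroot j ∈ R.Δ := by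
    have h := R.reflect_root_mem _ hi _ hj
    rwa [R.reflect_adj hsl hij hin] at h
  obtain ⟨cθ, hcθ, hcθl, hcθr, hcθ2, hcθm⟩ := R.cartan hsl hθΔ hδΔ
  have hJJ : ⟪R.sroot j, R.sroot j⟫ = ⟪R.sroot i, R.sroot i⟫ := hsl _ hj _ hi
  have hθθ : ⟪R.sroot i + R.sroot j, R.sroot i + R.sroot j⟫ = ⟪R.sroot i, R.sroot i⟫ :=
    hsl _ hθΔ _ hi
  have hsumθ : (cθ : ℝ) = ci + cj := by
    rw [← hcθ, ← hci, ← hcj, hJJ, hθθ, inner_add_left]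
    field_simp
  have hcθeq : cθ = ci + cj := by exact_mod_cast hsumθ
  have happ : ∀ t : List ι, R.pr (l₁ ++ t ++ l₂) γ = R.pr l₁ (R.pr t δ) := by
    intro t
    rw [R.pr_append (l₁ ++ t) l₂, R.pr_append l₁ t, RSD.mul_apply', RSD.mul_apply', ← hδdef]
  have hμeq : R.pr l₁ (R.reflect (R.sroot i) (R.reflect (R.sroot j)
      (R.reflect (R.sroot i) δ))) = μ := by
    rw [← hwγ, ← hl', happ [i, j, i]]
    simp only [RSD.pr_cons, RSD.pr_nil, mul_one, RSD.mul_apply']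
  have hlen3 : l₁.length + 3 + l₂.length = R.len w := by
    simp only [List.length_append, List.length_cons, List.length_nil] at hlen
    omega
  have hshort : ∀ l' : List ι, R.pr l' γ = μ → l'.length < R.len w → False := by
    intro l' h1 h2
    have h3 := hmin (R.pr l') (R.pr_mem_W l') h1
    have h4 := R.len_le (R.pr l') l' rfl
    omega
  by_cases hci0 : ci = 0
  · have hδi : ⟪R.sroot i, δ⟫ = 0 := by
      rw [hci0, Int.cast_zero, div_eq_iff hA] at hci
      linarith
    have hfix : R.reflect (R.sroot i) δ = δ := by
      rw [R.reflect_apply _ hi, hδi]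
      simp
    apply hshort (l₁ ++ [i, j] ++ l₂) ?_ ?_
    · rw [happ [i, j], ← hμeq, hfix]
      simp only [RSD.pr_cons, RSD.pr_nil, mul_one, RSD.mul_apply']
    · simp only [List.length_append, List.length_cons, List.length_nil]
      omega
  by_cases hcj0 : cj = 0
  · have hδj : ⟪R.sroot j, δ⟫ = 0 := by
      rw [hcj0, Int.cast_zero, div_eq_iff hAj] at hcj
      linarith
    have hfix : R.reflect (R.sroot j) δ = δ := by
      rw [R.reflect_apply _ hj, hδj]
      simp
    apply hshort (l₁ ++ [j, i] ++ l₂) ?_ ?_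
    · rw [happ [j, i], ← hμeq, R.braid hsl hij hin δ, hfix]
      simp only [RSD.pr_cons, RSD.pr_nil, mul_one, RSD.mul_apply']
    · simp only [List.length_append, List.length_cons, List.length_nil]
      omega
  by_cases hc0 : ci + cj = 0
  · have h1 : (ci : ℝ) + (cj : ℝ) = 0 := by exact_mod_cast hc0
    rw [← hci, ← hcj, hJJ] at h1
    have hδθ : ⟪R.sroot i, δ⟫ + ⟪R.sroot j, δ⟫ = 0 := by
      field_simp [hA] at h1
      linarith
    have hfix : R.reflect (R.sroot i) (R.reflect (R.sroot j)
        (R.reflect (R.sroot i) δ)) = δ := by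
      rw [R.braid_formula hsl hij hin δ, hδθ]
      simp
    apply hshort (l₁ ++ l₂) ?_ ?_
    · rw [R.pr_append l₁ l₂, RSD.mul_apply', ← hδdef, ← hμeq, hfix]
    · simp only [List.length_append]
      omega
  -- remaining: δ is one of ±αi, ±αj, ±(αi+αj)
  have hsix : ci = 2 ∨ ci = -2 ∨ cj = 2 ∨ cj = -2 ∨ cθ = 2 ∨ cθ = -2 := by omega
  have hsii : R.reflect (R.sroot i) (R.sroot i) = -R.sroot i := R.reflect_self hi
  have hsjj : R.reflect (R.sroot j) (R.sroot j) = -R.sroot j := R.reflect_self hj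
  have hsij : R.reflect (R.sroot i) (R.sroot j) = R.sroot i + R.sroot j :=
    R.reflect_adj hsl hij hin
  have hsji : R.reflect (R.sroot j) (R.sroot i) = R.sroot i + R.sroot j := by
    rw [R.reflect_adj hsl hij.symm hin', add_comm]
  have hsiθ : R.reflect (R.sroot i) (R.sroot i + R.sroot j) = R.sroot j := by
    rw [map_add, hsii, hsij]; abel
  have hsjθ : R.reflect (R.sroot j) (R.sroot i + R.sroot j) = R.sroot i := by
    rw [map_add, hsji, hsjj]; abel
  -- reversal infrastructure
  have hwinv : R.pr (l₁ ++ [i, j, i] ++ l₂).reverse = w⁻¹ := by rw [R.pr_reverse, hl']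
  have hlenrevle : R.len w⁻¹ ≤ (l₁ ++ [i, j, i] ++ l₂).reverse.length := R.len_le _ _ hwinv
  obtain ⟨B, hB, hBlen⟩ := R.len_word w⁻¹ _ hwinv
  have hBrev : R.pr B.reverse = w := by rw [R.pr_reverse, hB, inv_inv]
  have h2 := R.len_le w _ hBrev
  have hlenrev : (l₁ ++ [i, j, i] ++ l₂).reverse.length = R.len w⁻¹ := by
    rw [List.length_reverse] at hlenrevle ⊢
    rw [List.length_reverse] at h2
    simp only [List.length_append, List.length_cons, List.length_nil] at *
    omega
  have hrevsplit : (l₁ ++ [i, j, i] ++ l₂).reverse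
      = l₂.reverse ++ [i, j, i] ++ l₁.reverse := by
    simp [List.reverse_append]
  have hback : ∀ x : V, R.pr l₂.reverse (R.pr l₂ x) = x := by
    intro x
    rw [R.pr_reverse]
    have h : ((R.pr l₂)⁻¹ * R.pr l₂) x = x := by rw [inv_mul_cancel]; rfl
    exact h
  have hδback : R.pr l₂.reverse δ = γ := by rw [hδdef]; exact hback γ
  rcases hsix with h | h | h | h | h | h
  · -- δ = αi, μ = -(m αj)
    have hδval : δ = R.sroot i := hci2 h
    have hμval : -(R.pr l₁ (R.sroot j)) = μ := by
      rw [← hμeq, hδval, hsii, map_neg, hsji, map_neg, hsiθ, map_neg]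
    have hs3 : (l₁ ++ [i, j]) ++ [i] ++ l₂ = l₁ ++ [i, j, i] ++ l₂ := by simp
    have hpp : R.pr (l₁ ++ [i, j]) (R.sroot i) ∈ R.pos :=
      R.prefix_pos (w := w) hsl (l₁ ++ [i, j]) i l₂ (by rw [hs3]; exact hl') (by rw [hs3]; exact hlen)
    simp only [RSD.pr_append, RSD.pr_cons, RSD.pr_nil, mul_one, RSD.mul_apply'] at hpp
    rw [hsji, hsiθ] at hpp
    exact R.pos_neg_false hpp (by rw [hμval]; exact hμ)
  · -- δ = -αi, γ = -(v⁻¹ αi)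
    have hδval : δ = -R.sroot i := hcim h
    have hγval : γ = -(R.pr l₂.reverse (R.sroot i)) := by
      rw [← hδback, hδval, map_neg]
    have hrs : l₂.reverse ++ [i] ++ ([j, i] ++ l₁.reverse)
        = (l₁ ++ [i, j, i] ++ l₂).reverse := by rw [hrevsplit]; simp
    have hpp : R.pr l₂.reverse (R.sroot i) ∈ R.pos :=
      R.prefix_pos (w := w⁻¹) hsl l₂.reverse i ([j, i] ++ l₁.reverse)
        (by rw [hrs]; exact hwinv) (by rw [hrs]; exact hlenrev)
    exact R.pos_neg_false hpp (by rw [← hγval]; exact hγ)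
  · -- δ = αj, μ = -(m αi)
    have hδval : δ = R.sroot j := hcj2 h
    have hμval : -(R.pr l₁ (R.sroot i)) = μ := by
      rw [← hμeq, hδval, hsij, hsjθ, hsii, map_neg]
    have hs1 : l₁ ++ [i] ++ ([j, i] ++ l₂) = l₁ ++ [i, j, i] ++ l₂ := by simp
    have hpp : R.pr l₁ (R.sroot i) ∈ R.pos :=
      R.prefix_pos (w := w) hsl l₁ i ([j, i] ++ l₂) (by rw [hs1]; exact hl') (by rw [hs1]; exact hlen)
    exact R.pos_neg_false hpp (by rw [hμval]; exact hμ)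
  · -- δ = -αj, γ = -(v⁻¹ αj)
    have hδval : δ = -R.sroot j := hcjm h
    have hγval : γ = -(R.pr l₂.reverse (R.sroot j)) := by
      rw [← hδback, hδval, map_neg]
    have hrs : (l₂.reverse ++ [i, j]) ++ [i] ++ l₁.reverse
        = (l₁ ++ [i, j, i] ++ l₂).reverse := by rw [hrevsplit]; simp
    have hpp : R.pr (l₂.reverse ++ [i, j]) (R.sroot i) ∈ R.pos :=
      R.prefix_pos (w := w⁻¹) hsl (l₂.reverse ++ [i, j]) i l₁.reverse
        (by rw [hrs]; exact hwinv) (by rw [hrs]; exact hlenrev)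
    simp only [RSD.pr_append, RSD.pr_cons, RSD.pr_nil, mul_one, RSD.mul_apply'] at hpp
    rw [hsji, hsiθ] at hpp
    exact R.pos_neg_false hpp (by rw [← hγval]; exact hγ)
  · -- δ = θ, μ = -(m θ)
    have hδval : δ = R.sroot i + R.sroot j := hcθ2 h
    have hμval : -(R.pr l₁ (R.sroot i + R.sroot j)) = μ := by
      rw [← hμeq, hδval, hsiθ, hsjj, map_neg, hsij, map_neg]
    have hs2 : (l₁ ++ [i]) ++ [j] ++ ([i] ++ l₂) = l₁ ++ [i, j, i] ++ l₂ := by simp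
    have hpp : R.pr (l₁ ++ [i]) (R.sroot j) ∈ R.pos :=
      R.prefix_pos (w := w) hsl (l₁ ++ [i]) j ([i] ++ l₂) (by rw [hs2]; exact hl') (by rw [hs2]; exact hlen)
    simp only [RSD.pr_append, RSD.pr_cons, RSD.pr_nil, mul_one, RSD.mul_apply'] at hpp
    rw [hsij] at hpp
    exact R.pos_neg_false hpp (by rw [hμval]; exact hμ)
  · -- δ = -θ, γ = -(v⁻¹ θ)
    have hδval : δ = -(R.sroot i + R.sroot j) := hcθm h
    have hγval : γ = -(R.pr l₂.reverse (R.sroot i + R.sroot j)) := by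
      rw [← hδback, hδval, map_neg]
    have hrs : (l₂.reverse ++ [i]) ++ [j] ++ ([i] ++ l₁.reverse)
        = (l₁ ++ [i, j, i] ++ l₂).reverse := by rw [hrevsplit]; simp
    have hpp : R.pr (l₂.reverse ++ [i]) (R.sroot j) ∈ R.pos :=
      R.prefix_pos (w := w⁻¹) hsl (l₂.reverse ++ [i]) j ([i] ++ l₁.reverse)
        (by rw [hrs]; exact hwinv) (by rw [hrs]; exact hlenrev)
    simp only [RSD.pr_append, RSD.pr_cons, RSD.pr_nil, mul_one, RSD.mul_apply'] at hpp
    rw [hsij] at hpp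
    exact R.pos_neg_false hpp (by rw [← hγval]; exact hγ)
end

section
/- In a simply-laced irreducible root system, the depth of any positive root γ (the minimal length of w ∈ W with w(γ) ∈ −Δ⁺) equals the height ht(γ) = Σ c_α, where γ = Σ_{α∈Π} c_α α. -/
open scoped RealInnerProductSpace

section Aux

variable {ι V : Type*} [Fintype ι] [NormedAddCommGroup V] [InnerProductSpace ℝ V]
  (R : RSD ι V)

open RSD

lemma RSD.coeff_unique {f g : ι → ℝ}
    (h : ∑ i, f i • R.sroot i = ∑ i, g i • R.sroot i) : f = g := by
  funext i
  have h2 : ∑ i, (f - g) i • R.sroot i = 0 := by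
    simp only [Pi.sub_apply, sub_smul, Finset.sum_sub_distrib, h, sub_self]
  have := Fintype.linearIndependent_iff.1 R.sroot_indep (f - g) h2 i
  simpa [sub_eq_zero] using this

lemma RSD.pos_ne_zero {x : V} (hx : x ∈ R.pos) : x ≠ 0 :=
  fun h => R.zero_not_mem (h ▸ hx.1)

lemma RSD.not_pos_neg {x : V} (hx : x ∈ R.pos) (hx' : -x ∈ R.pos) : False := by
  obtain ⟨hm, c, hc⟩ := hx
  obtain ⟨hmem, d, hd⟩ := hx'
  have h0 : ∑ i, (fun i => (c i : ℝ) + (d i : ℝ)) i • R.sroot i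
      = ∑ i, (fun _ => (0:ℝ)) i • R.sroot i := by
    simp only [add_smul, Finset.sum_add_distrib, ← hc, ← hd]
    simp
  have hcd := R.coeff_unique h0
  have hc0 : ∀ i, (c i : ℝ) = 0 := by
    intro i
    have h1 := congrFun hcd i
    have h2 : (0:ℝ) ≤ (c i : ℝ) := Nat.cast_nonneg _
    have h3 : (0:ℝ) ≤ (d i : ℝ) := Nat.cast_nonneg _
    linarith
  have hx0 : x = 0 := by
    rw [hc]
    exact Finset.sum_eq_zero fun i _ => by rw [hc0 i, zero_smul]
  exact R.zero_not_mem (hx0 ▸ hm)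

lemma RSD.htIs_unique {x : V} {m n : ℕ} (hm : R.HtIs x m) (hn : R.HtIs x n) :
    m = n := by
  obtain ⟨c, hc, hcs⟩ := hm
  obtain ⟨d, hd, hds⟩ := hn
  have h := R.coeff_unique (f := fun i => (c i : ℝ)) (g := fun i => (d i : ℝ))
    (by rw [← hc, ← hd])
  have hcd : c = d := funext fun i => Nat.cast_injective (congrFun h i)
  rw [← hcs, ← hds, hcd]

lemma RSD.htIs_sroot (j : ι) : R.HtIs (R.sroot j) 1 := by
  classical
  refine ⟨fun i => if i = j then 1 else 0, ?_, by simp⟩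
  rw [Finset.sum_eq_single j]
  · simp
  · intro i _ hij
    simp [hij]
  · intro h
    exact absurd (Finset.mem_univ j) h

lemma RSD.sroot_pos_s8 (j : ι) : R.sroot j ∈ R.pos := by
  obtain ⟨c, hc, -⟩ := R.htIs_sroot j
  exact ⟨R.sroot_mem j, c, hc⟩

lemma RSD.pos_htIs {x : V} (hx : x ∈ R.pos) : ∃ n, R.HtIs x n := by
  obtain ⟨-, c, hc⟩ := hx
  exact ⟨∑ i, c i, c, hc, rfl⟩

lemma RSD.root_pos_or_neg {a : V} (ha : a ∈ R.Δ) : a ∈ R.pos ∨ -a ∈ R.pos := by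
  rcases R.decomp a ha with ⟨c, hc⟩ | ⟨c, hc⟩
  · exact Or.inl ⟨ha, c, hc⟩
  · exact Or.inr ⟨R.neg_mem a ha, c, by rw [hc, neg_neg]⟩

lemma RSD.inner_self_pos' {a : V} (ha : a ∈ R.Δ) : 0 < ⟪a, a⟫ := by
  have h0 : a ≠ 0 := fun h => R.zero_not_mem (h ▸ ha)
  rw [real_inner_self_eq_norm_sq]
  exact pow_pos (norm_pos_iff.2 h0) 2

/-- The reflection in a simple root sends it to its negative. -/
lemma RSD.reflect_sroot_self (j : ι) :
    R.reflect (R.sroot j) (R.sroot j) = -R.sroot j := by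
  have h0 := R.inner_self_pos' (R.sroot_mem j)
  rw [R.reflect_apply _ (R.sroot_mem j)]
  rw [mul_div_assoc, div_self h0.ne']
  module

/-- The pairing with a simple root is an integer, and the reflection formula. -/
lemma RSD.pairing_int (j : ι) {b : V} (hb : b ∈ R.Δ) :
    ∃ z : ℤ, 2 * ⟪R.sroot j, b⟫ / ⟪R.sroot j, R.sroot j⟫ = (z : ℝ) ∧
      R.reflect (R.sroot j) b = b - (z : ℝ) • R.sroot j := by
  obtain ⟨z, hz⟩ := R.crys _ (R.sroot_mem j) b hb
  exact ⟨z, hz, by rw [R.reflect_apply _ (R.sroot_mem j), hz]⟩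

/-- In a simply-laced system, a positive root distinct from a simple root has
pairing at most 1 in absolute value with that simple root. -/
lemma RSD.pairing_abs_le_one (hsl : R.SimplyLaced) (j : ι) {b : V}
    (hb : b ∈ R.pos) (hne : b ≠ R.sroot j) {z : ℤ}
    (hz : 2 * ⟪R.sroot j, b⟫ / ⟪R.sroot j, R.sroot j⟫ = (z : ℝ)) : z.natAbs ≤ 1 := by
  set a := R.sroot j with ha
  have haΔ : a ∈ R.Δ := R.sroot_mem j
  have hbΔ : b ∈ R.Δ := hb.1
  have hlen : ⟪a, a⟫ = ⟪b, b⟫ := hsl a haΔ b hbΔ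
  have hna : ‖a‖ = ‖b‖ := by
    have h := hlen
    rw [real_inner_self_eq_norm_sq, real_inner_self_eq_norm_sq] at h
    nlinarith [norm_nonneg a, norm_nonneg b]
  have hb0 : b ≠ 0 := R.pos_ne_zero hb
  have ha0 : a ≠ 0 := fun h => R.zero_not_mem (h ▸ haΔ)
  have hapos : (0:ℝ) < ‖a‖ := norm_pos_iff.2 ha0
  have hne' : b ≠ -a := by
    intro h
    exact R.not_pos_neg (R.sroot_pos_s8 j) (h ▸ hb)
  have h1 : ⟪a, b⟫ < ‖a‖ * ‖b‖ := by
    rw [inner_lt_norm_mul_iff_real]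
    intro h
    rw [← hna] at h
    exact hne (smul_right_injective V hapos.ne' h).symm
  have h2 : ⟪a, -b⟫ < ‖a‖ * ‖-b‖ := by
    rw [inner_lt_norm_mul_iff_real]
    intro h
    rw [norm_neg, ← hna] at h
    have h3 := smul_right_injective V hapos.ne' h
    exact hne' (by rw [h3, neg_neg])
  rw [inner_neg_right, norm_neg] at h2
  have haa : (0:ℝ) < ⟪a, a⟫ := R.inner_self_pos' haΔ
  have hnn : ‖a‖ * ‖b‖ = ⟪a, a⟫ := by
    rw [← hna, ← real_inner_self_eq_norm_mul_norm]
  rw [hnn] at h1 h2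
  have hzval : (z : ℝ) * ⟪a, a⟫ = 2 * ⟪a, b⟫ := by
    field_simp at hz
    linarith [hz]
  have hlt : (z : ℝ) < 2 ∧ (-2 : ℝ) < z := by
    constructor <;> nlinarith
  have hz2 : z < 2 := by exact_mod_cast hlt.1
  have hz3 : -2 < z := by exact_mod_cast hlt.2
  omega

/-- Key step: subtracting `z • sroot j` (|z| ≤ 1) from a positive root `b ≠ sroot j`,
if the result is a root, it is positive of height `n - z`. -/
lemma RSD.step (hsl : R.SimplyLaced) (j : ι) {b : V} (hb : b ∈ R.pos)
    (hne : b ≠ R.sroot j) {z : ℤ}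
    (hroot : b - (z : ℝ) • R.sroot j ∈ R.Δ) {n : ℕ} (hn : R.HtIs b n) :
    (b - (z : ℝ) • R.sroot j ∈ R.pos) ∧
      ∃ m : ℕ, R.HtIs (b - (z : ℝ) • R.sroot j) m ∧ (m : ℤ) = (n : ℤ) - z := by
  classical
  obtain ⟨c, hc, hcs⟩ := hn
  rcases R.root_pos_or_neg hroot with hp | hnp
  · -- positive case
    obtain ⟨-, e, he⟩ := hp
    refine ⟨⟨hroot, e, he⟩, ∑ i, e i, ⟨e, he, rfl⟩, ?_⟩
    have heq : ∑ i, (fun i => (e i : ℝ)) i • R.sroot i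
        = ∑ i, (fun i => (c i : ℝ) - (if i = j then (z:ℝ) else 0)) i • R.sroot i := by
      simp only [sub_smul, Finset.sum_sub_distrib, ← hc, ite_smul, zero_smul]
      rw [← he, Finset.sum_ite_eq' Finset.univ j (fun i => (z:ℝ) • R.sroot i)]
      simp
    have hco := R.coeff_unique heq
    have hcoe : ∀ i, (e i : ℤ) = (c i : ℤ) - (if i = j then z else 0) := by
      intro i
      have h1 := congrFun hco i
      have h2 : ((e i : ℤ) : ℝ) = (((c i : ℤ) - (if i = j then z else 0) : ℤ) : ℝ) := by
        push_cast
        split <;> simp_all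
      exact_mod_cast h2
    have hsum : ∑ i, (e i : ℤ) = ∑ i, ((c i : ℤ) - (if i = j then z else 0)) :=
      Finset.sum_congr rfl fun i _ => hcoe i
    rw [Finset.sum_sub_distrib, Finset.sum_ite_eq' Finset.univ j (fun _ => z)] at hsum
    simp only [Finset.mem_univ, if_true] at hsum
    have h4 : ((∑ i, e i : ℕ) : ℤ) = ∑ i, (e i : ℤ) := by push_cast; ring
    have h5 : ((∑ i, c i : ℕ) : ℤ) = ∑ i, (c i : ℤ) := by push_cast; ring
    rw [h4, hsum, ← h5, hcs]
  · -- negative case: contradiction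
    exfalso
    obtain ⟨-, d, hd⟩ := hnp
    have heq : ∑ i, (fun i => (c i : ℝ) + (d i : ℝ)) i • R.sroot i
        = ∑ i, (fun i => (if i = j then (z:ℝ) else 0)) i • R.sroot i := by
      simp only [add_smul, Finset.sum_add_distrib, ← hc, ← hd, ite_smul, zero_smul]
      rw [Finset.sum_ite_eq' Finset.univ j (fun i => (z:ℝ) • R.sroot i)]
      simp
    have hco := R.coeff_unique heq
    have hcz : ∀ i, i ≠ j → (c i : ℝ) = 0 := by
      intro i hij
      have h1 := congrFun hco i
      simp only [if_neg hij] at h1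
      have h2 : (0:ℝ) ≤ (c i : ℝ) := Nat.cast_nonneg _
      have h3 : (0:ℝ) ≤ (d i : ℝ) := Nat.cast_nonneg _
      linarith
    have hbj : b = (c j : ℝ) • R.sroot j := by
      rw [hc, Finset.sum_eq_single j]
      · intro i _ hij
        rw [hcz i hij, zero_smul]
      · intro h
        exact absurd (Finset.mem_univ j) h
    have hlen : ⟪b, b⟫ = ⟪R.sroot j, R.sroot j⟫ := hsl b hb.1 _ (R.sroot_mem j)
    have haa : (0:ℝ) < ⟪R.sroot j, R.sroot j⟫ := R.inner_self_pos' (R.sroot_mem j)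
    rw [hbj, real_inner_smul_left, real_inner_smul_right] at hlen
    have hcj : (c j : ℝ) = 1 := by
      have h6 : (0:ℝ) ≤ (c j : ℝ) := Nat.cast_nonneg _
      have h7 : ((c j:ℝ) - 1) * (((c j:ℝ) + 1) * ⟪R.sroot j, R.sroot j⟫) = 0 := by
        nlinarith [hlen]
      rcases mul_eq_zero.1 h7 with h | h
      · linarith
      · exfalso
        nlinarith
    exact hne (by rw [hbj, hcj, one_smul])

/-- Lemma A. -/
lemma RSD.lemmaA (hsl : R.SimplyLaced) :
    ∀ l : List ι, ∀ γ : V, γ ∈ R.pos → ∀ n : ℕ, R.HtIs γ n →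
      (((l.map fun i => R.reflect (R.sroot i)).prod γ ∈ R.pos ∧
        ∃ n', R.HtIs ((l.map fun i => R.reflect (R.sroot i)).prod γ) n' ∧
          n ≤ n' + l.length) ∨
       (-((l.map fun i => R.reflect (R.sroot i)).prod γ) ∈ R.pos ∧ n ≤ l.length)) := by
  intro l
  induction l with
  | nil =>
    intro γ hγ n hn
    left
    simpa using ⟨hγ, n, hn, le_refl n⟩
  | cons j t ih =>
    intro γ hγ n hn
    have hprod : (((j :: t).map fun i => R.reflect (R.sroot i)).prod) γ
        = R.reflect (R.sroot j) (((t.map fun i => R.reflect (R.sroot i)).prod) γ) := by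
      rfl
    set δ := ((t.map fun i => R.reflect (R.sroot i)).prod) γ with hδ
    rcases ih γ hγ n hn with ⟨hδpos, n', hn', hle⟩ | ⟨hδneg, hle⟩
    · by_cases hcase : δ = R.sroot j
      · right
        rw [hprod, hcase, R.reflect_sroot_self, neg_neg]
        refine ⟨by rw [← hcase]; exact hδpos, ?_⟩
        have h1 : n' = 1 := R.htIs_unique hn' (by rw [← hδ, hcase]; exact R.htIs_sroot j)
        simp only [List.length_cons]
        omega
      · obtain ⟨z, hz, hrefl⟩ := R.pairing_int j hδpos.1
        have hzle := R.pairing_abs_le_one hsl j hδpos hcase hz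
        have hroot : δ - (z:ℝ) • R.sroot j ∈ R.Δ := by
          rw [← hrefl]
          exact R.reflect_root_mem _ (R.sroot_mem j) _ hδpos.1
        obtain ⟨hp, m, hm, hmz⟩ := R.step hsl j hδpos hcase hroot hn'
        left
        rw [hprod, hrefl]
        refine ⟨hp, m, hm, ?_⟩
        simp only [List.length_cons]
        omega
    · have hmem : -δ ∈ R.Δ := hδneg.1
      have hrootmem : R.reflect (R.sroot j) (-δ) ∈ R.Δ :=
        R.reflect_root_mem _ (R.sroot_mem j) _ hmem
      rcases R.root_pos_or_neg hrootmem with hp | hnp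
      · right
        rw [hprod]
        have hneg : -(R.reflect (R.sroot j) δ) = R.reflect (R.sroot j) (-δ) := by
          rw [map_neg]
        rw [hneg]
        exact ⟨hp, by simp only [List.length_cons]; omega⟩
      · left
        rw [hprod]
        have heq : R.reflect (R.sroot j) δ = -(R.reflect (R.sroot j) (-δ)) := by
          rw [map_neg, neg_neg]
        rw [heq]
        obtain ⟨m, hm⟩ := R.pos_htIs hnp
        exact ⟨hnp, m, hm, by simp only [List.length_cons]; omega⟩

/-- Lemma B. -/
lemma RSD.lemmaB (hsl : R.SimplyLaced) :
    ∀ n : ℕ, ∀ γ : V, γ ∈ R.pos → R.HtIs γ n →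
      ∃ l : List ι, l.length ≤ n ∧
        -((l.map fun i => R.reflect (R.sroot i)).prod γ) ∈ R.pos := by
  intro n
  induction n using Nat.strong_induction_on with
  | _ n ih =>
    intro γ hγ hn
    obtain ⟨c, hc, hcs⟩ := hn
    have hpos : (0:ℝ) < ⟪γ, γ⟫ := R.inner_self_pos' hγ.1
    have hsum : ∑ i, (c i : ℝ) * ⟪R.sroot i, γ⟫ = ⟪γ, γ⟫ := by
      have h1 : ⟪(∑ i, (c i:ℝ) • R.sroot i : V), γ⟫ = ∑ i, (c i:ℝ) * ⟪R.sroot i, γ⟫ := by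
        rw [sum_inner]
        exact Finset.sum_congr rfl fun i _ => real_inner_smul_left _ _ _
      rw [← h1, ← hc]
    have hex : ∃ j, 0 < (c j : ℝ) * ⟪R.sroot j, γ⟫ := by
      by_contra h
      push_neg at h
      have h2 : ∑ i, (c i : ℝ) * ⟪R.sroot i, γ⟫ ≤ 0 :=
        Finset.sum_nonpos fun i _ => h i
      rw [hsum] at h2
      linarith
    obtain ⟨j, hj⟩ := hex
    have hje : 0 < ⟪R.sroot j, γ⟫ := by
      rcases lt_trichotomy (⟪R.sroot j, γ⟫ : ℝ) 0 with h | h | h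
      · have h2 : (0:ℝ) ≤ (c j : ℝ) := Nat.cast_nonneg _
        nlinarith
      · nlinarith
      · exact h
    by_cases hcase : γ = R.sroot j
    · refine ⟨[j], ?_, ?_⟩
      · have h1 : n = 1 := R.htIs_unique ⟨c, hc, hcs⟩ (by rw [hcase]; exact R.htIs_sroot j)
        simp only [List.length_cons, List.length_nil]
        omega
      · simp only [List.map_cons, List.map_nil, List.prod_cons, List.prod_nil, mul_one]
        rw [hcase, R.reflect_sroot_self, neg_neg]
        exact R.sroot_pos_s8 j
    · obtain ⟨z, hz, hrefl⟩ := R.pairing_int j hγ.1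
      have hz1 : z = 1 := by
        have hzle := R.pairing_abs_le_one hsl j hγ hcase hz
        have haa : (0:ℝ) < ⟪R.sroot j, R.sroot j⟫ := R.inner_self_pos' (R.sroot_mem j)
        have h0 : (0:ℝ) < (z:ℝ) := by
          rw [← hz]
          positivity
        have h1 : 0 < z := by exact_mod_cast h0
        omega
      have hroot : γ - (z:ℝ) • R.sroot j ∈ R.Δ := by
        rw [← hrefl]
        exact R.reflect_root_mem _ (R.sroot_mem j) _ hγ.1
      obtain ⟨hp, m, hm, hmz⟩ := R.step hsl j hγ hcase hroot ⟨c, hc, hcs⟩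
      have hn1 : 1 ≤ n := by omega
      have hmn : m + 1 = n := by omega
      obtain ⟨l', hl'len, hl'⟩ := ih m (by omega) _ hp hm
      refine ⟨l' ++ [j], ?_, ?_⟩
      · simp only [List.length_append, List.length_cons, List.length_nil]
        omega
      · have heq : ((l' ++ [j]).map fun i => R.reflect (R.sroot i)).prod γ
            = ((l'.map fun i => R.reflect (R.sroot i)).prod) (R.reflect (R.sroot j) γ) := by
          rw [List.map_append, List.prod_append]
          simp only [List.map_cons, List.map_nil, List.prod_cons, List.prod_nil, mul_one]
          rfl
        rw [heq, hrefl]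
        exact hl'

/-- Every element of the Weyl group is a product of simple reflections. -/
lemma RSD.exists_word {w : V ≃ₗ[ℝ] V} (hw : w ∈ R.W) :
    ∃ l : List ι, (l.map fun i => R.reflect (R.sroot i)).prod = w := by
  induction hw using Subgroup.closure_induction with
  | mem x hx =>
    obtain ⟨i, rfl⟩ := hx
    exact ⟨[i], by simp⟩
  | one => exact ⟨[], by simp⟩
  | mul x y hx hy ihx ihy =>
    obtain ⟨lx, hlx⟩ := ihx
    obtain ⟨ly, hly⟩ := ihy
    exact ⟨lx ++ ly, by rw [List.map_append, List.prod_append, hlx, hly]⟩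
  | inv x hx ihx =>
    obtain ⟨lx, hlx⟩ := ihx
    refine ⟨lx.reverse, ?_⟩
    have hinv : ∀ i : ι, (R.reflect (R.sroot i))⁻¹ = R.reflect (R.sroot i) := by
      intro i
      have hsq : R.reflect (R.sroot i) * R.reflect (R.sroot i) = 1 := by
        have haa : (0:ℝ) < ⟪R.sroot i, R.sroot i⟫ := R.inner_self_pos' (R.sroot_mem i)
        apply LinearEquiv.toLinearMap_injective
        apply LinearMap.ext
        intro v
        show R.reflect (R.sroot i) (R.reflect (R.sroot i) v) = v
        rw [R.reflect_apply _ (R.sroot_mem i) v,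
          R.reflect_apply _ (R.sroot_mem i)]
        rw [inner_sub_right, real_inner_smul_right]
        field_simp
        ring_nf
        rw [mul_comm]
        module
      exact eq_inv_of_mul_eq_one_left hsq ▸ (inv_eq_of_mul_eq_one_right hsq).symm
    rw [← hlx, List.prod_inv_reverse]
    have h1 : ((lx.map fun i => R.reflect (R.sroot i)).map fun x => x⁻¹)
        = lx.map fun i => R.reflect (R.sroot i) := by
      rw [List.map_map]
      exact List.map_congr_left fun i _ => hinv i
    rw [h1]
    congr 1
    exact List.map_reverse

/-- Membership of word products in the Weyl group. -/
lemma RSD.word_mem (l : List ι) :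
    (l.map fun i => R.reflect (R.sroot i)).prod ∈ R.W := by
  induction l with
  | nil => simp [Subgroup.one_mem]
  | cons j t ih =>
    simp only [List.map_cons, List.prod_cons]
    exact Subgroup.mul_mem _ (Subgroup.subset_closure ⟨j, rfl⟩) ih


lemma RSD.len_word_le (l : List ι) :
    R.len ((l.map fun i => R.reflect (R.sroot i)).prod) ≤ l.length :=
  Nat.sInf_le ⟨l, rfl, rfl⟩

lemma RSD.exists_word_len {w : V ≃ₗ[ℝ] V} (hw : w ∈ R.W) :
    ∃ l : List ι, l.length = R.len w ∧
      (l.map fun i => R.reflect (R.sroot i)).prod = w := by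
  obtain ⟨l₁, hl₁⟩ := R.exists_word hw
  have hne : {k | ∃ l : List ι, l.length = k ∧
      (l.map fun i => R.reflect (R.sroot i)).prod = w}.Nonempty := ⟨l₁.length, l₁, rfl, hl₁⟩
  exact Nat.sInf_mem hne

end Aux

/-- In a simply-laced root system, the depth of a positive root
equals its height. -/
theorem depth_eq_height
    {ι V : Type*} [Fintype ι] [NormedAddCommGroup V] [InnerProductSpace ℝ V]
    (R : RSD ι V) (hsl : R.SimplyLaced) (γ : V) (hγ : γ ∈ R.pos)
    (n : ℕ) (hht : R.HtIs γ n) :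
    sInf {m : ℕ | ∃ w ∈ R.W, -(w γ) ∈ R.pos ∧ R.len w = m} = n := by
  classical
  obtain ⟨l, hllen, hlneg⟩ := R.lemmaB hsl n γ hγ hht
  have hw₀W : (l.map fun i => R.reflect (R.sroot i)).prod ∈ R.W := R.word_mem l
  have hlenle : R.len ((l.map fun i => R.reflect (R.sroot i)).prod) ≤ n :=
    le_trans (R.len_word_le l) hllen
  have hmemS : R.len ((l.map fun i => R.reflect (R.sroot i)).prod) ∈
      {m : ℕ | ∃ w ∈ R.W, -(w γ) ∈ R.pos ∧ R.len w = m} :=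
    ⟨_, hw₀W, hlneg, rfl⟩
  have hub : sInf {m : ℕ | ∃ w ∈ R.W, -(w γ) ∈ R.pos ∧ R.len w = m} ≤ n :=
    le_trans (Nat.sInf_le hmemS) hlenle
  have hlb : ∀ m ∈ {m : ℕ | ∃ w ∈ R.W, -(w γ) ∈ R.pos ∧ R.len w = m}, n ≤ m := by
    rintro m ⟨w, hwW, hwneg, hwlen⟩
    obtain ⟨l₂, hl₂len, hl₂⟩ := R.exists_word_len hwW
    rcases R.lemmaA hsl l₂ γ hγ n hht with ⟨hpos2, -⟩ | ⟨-, hle⟩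
    · exfalso
      rw [hl₂] at hpos2
      exact R.not_pos_neg hpos2 hwneg
    · calc n ≤ l₂.length := hle
        _ = R.len w := hl₂len
        _ = m := hwlen
  exact le_antisymm hub (le_csInf ⟨_, hmemS⟩ hlb)
end
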